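/- Let 0 < r < s, and set r′ = inf{‖u‖_∞ : u ∈ H, μ(u) ≥ r} and s′ = sup{‖u‖_∞ : u ∈ H, μ(u) ≤ s}. Assume: (1) for every k ∈ {1,...,T} and every ε > 0 there exists K > 0 such that F(k,t) ≤ ε·|t|^{p⁻} whenever |t| > K (i.e. limsup_{|t|→∞} F(k,t)/|t|^{p⁻} ≤ 0); (2) there exist t₁,...,t_T ∈ ℝ with Σ_{k=1}^{T} F(k,t_k) > Σ_{k=1}^{T} sup_{|t|≤s′} F(k,t); (3) for every k ∈ {1,...,T}, sup_{r′≤|t|≤s′} F(k,t) ≤ −Σ_{h≠k} sup_{|t|≤s′} F(h,t). Then there exists λ* > 0 such that E_{λ*} has at least three critical points in H, at least two of which are nonzero. -/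

import Mathlib

set_option maxHeartbeats 1000000



/-- μ(u) = Σ_{k=1}^{T+1} (1/p(k−1))|Δu(k−1)|^{p(k−1)}. -/
noncomputable def muF (T : ℕ) (p : ℕ → ℝ) (u : ℕ → ℝ) : ℝ :=
  ∑ k ∈ Finset.Icc 1 (T + 1), (1 / p (k - 1)) * |u k - u (k - 1)| ^ p (k - 1)

/-- F(k,t) = ∫₀ᵗ f(k,τ) dτ. -/
noncomputable def Fint (f : ℕ → ℝ → ℝ) (k : ℕ) (t : ℝ) : ℝ :=
  ∫ τ in (0:ℝ)..t, f k τ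

/-- ‖u‖_∞ = max_{1 ≤ k ≤ T} |u(k)| (as the supremum of the corresponding set). -/
noncomputable def supNorm (T : ℕ) (u : ℕ → ℝ) : ℝ :=
  sSup {x : ℝ | ∃ k, 1 ≤ k ∧ k ≤ T ∧ x = |u k|}

/-- sup_{|t| ≤ σ} F(k,t). -/
noncomputable def supFle (f : ℕ → ℝ → ℝ) (k : ℕ) (σ : ℝ) : ℝ :=
  sSup {y : ℝ | ∃ t : ℝ, |t| ≤ σ ∧ y = Fint f k t}

/-- sup_{ρ ≤ |t| ≤ σ} F(k,t). -/
noncomputable def supFbetween (f : ℕ → ℝ → ℝ) (k : ℕ) (ρ σ : ℝ) : ℝ :=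
  sSup {y : ℝ | ∃ t : ℝ, ρ ≤ |t| ∧ |t| ≤ σ ∧ y = Fint f k t}

/-- r′ = inf{‖u‖_∞ : u ∈ H, μ(u) ≥ r}. -/
noncomputable def rPrime (T : ℕ) (p : ℕ → ℝ) (r : ℝ) : ℝ :=
  sInf {x : ℝ | ∃ u : ℕ → ℝ, u 0 = 0 ∧ u (T + 1) = 0 ∧ r ≤ muF T p u ∧ x = supNorm T u}

/-- s′ = sup{‖u‖_∞ : u ∈ H, μ(u) ≤ s}. -/
noncomputable def sPrime (T : ℕ) (p : ℕ → ℝ) (s : ℝ) : ℝ :=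
  sSup {x : ℝ | ∃ u : ℕ → ℝ, u 0 = 0 ∧ u (T + 1) = 0 ∧ muF T p u ≤ s ∧ x = supNorm T u}

/-- `u ∈ H` is a critical point of `E_λ = μ + λ·J`:
`Σ_{k=1}^{T+1} |Δu(k−1)|^{p(k−1)−2}Δu(k−1)·Δv(k−1) = λ·Σ_{k=1}^{T} f(k,u(k))·v(k)` for all `v ∈ H`. -/
def IsCriticalPoint (T : ℕ) (p : ℕ → ℝ) (f : ℕ → ℝ → ℝ) (lam : ℝ) (u : ℕ → ℝ) : Prop :=
  u 0 = 0 ∧ u (T + 1) = 0 ∧ ∀ v : ℕ → ℝ, v 0 = 0 → v (T + 1) = 0 →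
    ∑ k ∈ Finset.Icc 1 (T + 1),
        |u k - u (k - 1)| ^ (p (k - 1) - 2) * (u k - u (k - 1)) * (v k - v (k - 1))
      = lam * ∑ k ∈ Finset.Icc 1 T, f k (u k) * v k

/-- `u` and `w` are distinct as elements of `H`. -/
def DistinctH (T : ℕ) (u w : ℕ → ℝ) : Prop :=
  ∃ k, 1 ≤ k ∧ k ≤ T ∧ u k ≠ w k

/-- `u ∈ H` is nonzero. -/
def NonzeroH (T : ℕ) (u : ℕ → ℝ) : Prop :=
  ∃ k, 1 ≤ k ∧ k ≤ T ∧ u k ≠ 0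



noncomputable def phiD (q t : ℝ) : ℝ := |t| ^ (q - 2) * t

lemma phiD_zero (q : ℝ) : phiD q 0 = 0 := by simp [phiD]

lemma abs_phiD (q : ℝ) (t : ℝ) (ht : t ≠ 0) (hq : 1 < q) : |phiD q t| = |t| ^ (q - 1) := by
  have h0 : (0:ℝ) < |t| := abs_pos.2 ht
  rw [phiD, abs_mul, abs_of_nonneg (Real.rpow_nonneg (abs_nonneg t) _)]
  rw [← Real.rpow_add_one (ne_of_gt h0)]
  ring_nf

lemma tendsto_abs_rpow_zero {q : ℝ} (hq : 0 < q) :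
    Filter.Tendsto (fun t : ℝ => |t| ^ q) (nhds 0) (nhds 0) := by
  have h : ContinuousAt (fun x : ℝ => x ^ q) (|(0:ℝ)|) := by
    apply Real.continuousAt_rpow_const
    right; exact le_of_lt hq
  have h2 : ContinuousAt (fun t : ℝ => |t| ^ q) 0 := h.comp (continuous_abs.continuousAt (x := (0:ℝ)))
  have h3 := h2.tendsto
  simpa [Real.zero_rpow (ne_of_gt hq)] using h3

lemma continuous_phiD {q : ℝ} (hq : 1 < q) : Continuous (phiD q) := by
  rw [continuous_iff_continuousAt]
  intro t₀
  by_cases ht : t₀ = 0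
  · subst ht
    rw [ContinuousAt, phiD_zero]
    apply squeeze_zero_norm' (a := fun t : ℝ => |t| ^ (q - 1))
    · filter_upwards with t
      by_cases h : t = 0
      · simp [h, phiD_zero, Real.rpow_nonneg]
      · rw [Real.norm_eq_abs, abs_phiD q t h hq]
    · exact tendsto_abs_rpow_zero (by linarith)
  · apply ContinuousAt.mul _ continuousAt_id
    exact (Real.continuousAt_rpow_const _ _ (Or.inl (abs_ne_zero.2 ht))).comp
      (continuous_abs.continuousAt)

lemma hasDerivAt_phiD {q : ℝ} (hq : 1 < q) (t₀ : ℝ) :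
    HasDerivAt (fun t : ℝ => |t| ^ q) (q * phiD q t₀) t₀ := by
  have := hasDerivAt_abs_rpow t₀ hq
  simpa [phiD, mul_assoc] using this




lemma Fint_zero (f : ℕ → ℝ → ℝ) (k : ℕ) : Fint f k 0 = 0 := by
  simp [Fint]

lemma hasDerivAt_Fint {f : ℕ → ℝ → ℝ} {k : ℕ} (hf : Continuous (f k)) (t : ℝ) :
    HasDerivAt (Fint f k) (f k t) t := by
  have : HasStrictDerivAt (fun u => ∫ x in (0:ℝ)..u, f k x) (f k t) t :=
    intervalIntegral.integral_hasStrictDerivAt_right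
      (hf.intervalIntegrable _ _) (hf.stronglyMeasurableAtFilter _ _) hf.continuousAt
  exact this.hasDerivAt

lemma continuous_Fint {f : ℕ → ℝ → ℝ} {k : ℕ} (hf : Continuous (f k)) :
    Continuous (Fint f k) := by
  rw [continuous_iff_continuousAt]
  exact fun t => (hasDerivAt_Fint hf t).continuousAt


section MPT

variable {n : ℕ}

local notation "V" => Fin n → ℝ

lemma clm_apply_eq_sum (L : (Fin n → ℝ) →L[ℝ] ℝ) (v : Fin n → ℝ) :
    L v = ∑ i, v i * L (Pi.single i 1) := by
  conv_lhs => rw [show v = ∑ i, Pi.single i (v i) from (Finset.univ_sum_single v).symm]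
  rw [map_sum]
  apply Finset.sum_congr rfl
  intro i _
  have : Pi.single i (v i) = v i • (Pi.single i (1:ℝ) : Fin n → ℝ) := by
    rw [← Pi.single_smul]; simp
  rw [this, map_smul, smul_eq_mul]

lemma clm_eq_zero_of_single {L : (Fin n → ℝ) →L[ℝ] ℝ}
    (h : ∀ i, L (Pi.single i 1) = 0) : L = 0 := by
  ext v
  rw [ContinuousLinearMap.zero_apply, clm_apply_eq_sum]
  simp [h]

theorem mpt_lite {E : (Fin n → ℝ) → ℝ} {D : (Fin n → ℝ) → ((Fin n → ℝ) →L[ℝ] ℝ)}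
    (hD : ∀ x, HasFDerivAt E (D x) x) (hDc : Continuous D)
    (coerc : ∀ M : ℝ, ∃ R, ∀ x, E x ≤ M → ‖x‖ ≤ R)
    {a b : Fin n → ℝ} {c₀ : ℝ} (hc₀ : 0 < c₀) (hEa : E a ≤ 0) (hEb : E b ≤ 0)
    (hring : ∀ γ : ℝ → (Fin n → ℝ), Continuous γ → γ 0 = a → γ 1 = b →
      ∃ t ∈ Set.Icc (0:ℝ) 1, c₀ ≤ E (γ t)) :
    ∃ x, D x = 0 ∧ c₀/2 ≤ E x := by
  by_contra hcon
  push_neg at hcon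
  -- no critical points in the upper band
  have hnocrit : ∀ x, c₀/2 ≤ E x → D x ≠ 0 := by
    intro x hx hDx
    exact absurd hx (not_le.2 (hcon x hDx))
  have hEcont : Continuous E := by
    rw [continuous_iff_continuousAt]; exact fun x => (hD x).continuousAt
  -- the segment
  set γ₀ : ℝ → V := fun t => a + t • (b - a) with hγ₀def
  have hγ₀cont : Continuous γ₀ := continuous_const.add (continuous_id.smul continuous_const)
  have hγ₀0 : γ₀ 0 = a := by simp [hγ₀def]
  have hγ₀1 : γ₀ 1 = b := by simp [hγ₀def]
  -- M₀ : bound for E on the segment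
  obtain ⟨z, hz, hzmax⟩ : ∃ z ∈ γ₀ '' Set.Icc (0:ℝ) 1, IsMaxOn E (γ₀ '' Set.Icc (0:ℝ) 1) z :=
    ((isCompact_Icc.image hγ₀cont)).exists_isMaxOn
      (Set.Nonempty.image _ ⟨0, Set.left_mem_Icc.2 zero_le_one⟩) hEcont.continuousOn
  set M₀ := E z with hM₀def
  have hseg_le : ∀ t ∈ Set.Icc (0:ℝ) 1, E (γ₀ t) ≤ M₀ := fun t ht =>
    hzmax (Set.mem_image_of_mem _ ht)
  have hM₀c₀ : c₀ ≤ M₀ := by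
    obtain ⟨t, ht, hct⟩ := hring γ₀ hγ₀cont hγ₀0 hγ₀1
    exact le_trans hct (hseg_le t ht)
  -- sublevel set bound and big ball
  obtain ⟨R, hR⟩ := coerc M₀
  have hR0 : 0 ≤ R := le_trans (norm_nonneg z) (hR z (le_of_eq rfl))
  set B : Set V := Metric.closedBall 0 (R + 1) with hBdef
  have hBcomp : IsCompact B := isCompact_closedBall 0 (R + 1)
  have hSB : ∀ x, E x ≤ M₀ → x ∈ B := by
    intro x hx
    simp only [hBdef, Metric.mem_closedBall, dist_zero_right]
    linarith [hR x hx]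
  -- the band K
  set K : Set V := {x | c₀/2 ≤ E x ∧ E x ≤ M₀} with hKdef
  have hKcomp : IsCompact K := by
    apply hBcomp.of_isClosed_subset
    · exact (isClosed_le continuous_const hEcont).inter (isClosed_le hEcont continuous_const)
    · intro x hx; exact hSB x hx.2
  have hKne : K.Nonempty := by
    obtain ⟨t, ht, hct⟩ := hring γ₀ hγ₀cont hγ₀0 hγ₀1
    exact ⟨γ₀ t, ⟨by linarith, hseg_le t ht⟩⟩
  -- Q and its min on K
  set Q : V → ℝ := fun x => ∑ i, (D x (Pi.single i 1))^2 with hQdef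
  have hQcont : Continuous Q := by
    apply continuous_finset_sum
    intro i _
    exact (hDc.clm_apply continuous_const).pow 2
  obtain ⟨xm, hxm, hxmmin⟩ := hKcomp.exists_isMinOn hKne hQcont.continuousOn
  set m2 := Q xm with hm2def
  have hm2pos : 0 < m2 := by
    rcases lt_or_eq_of_le (Finset.sum_nonneg (fun i _ => sq_nonneg _) : 0 ≤ Q xm) with hlt | heq
    · exact hlt
    · exfalso
      apply hnocrit xm hxm.1
      apply clm_eq_zero_of_single
      intro i
      have hall := (Finset.sum_eq_zero_iff_of_nonneg
        (fun i _ => sq_nonneg ((D xm) (Pi.single i 1)))).1 heq.symm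
      exact pow_eq_zero_iff (two_ne_zero) |>.1 (hall i (Finset.mem_univ i))
  have hQK : ∀ x ∈ K, m2 ≤ Q x := fun x hx => hxmmin hx
  -- gradient field
  set G : V → V := fun x i => D x (Pi.single i 1) with hGdef
  have hGcont : Continuous G := by
    apply continuous_pi
    intro i
    exact hDc.clm_apply continuous_const
  have hDG : ∀ x, D x (G x) = Q x := by
    intro x
    rw [clm_apply_eq_sum (D x) (G x)]
    apply Finset.sum_congr rfl
    intro i _
    rw [hGdef, sq]
  -- bound on ‖G‖ over B
  obtain ⟨xL, hxL, hxLmax⟩ := hBcomp.exists_isMaxOn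
    ⟨0, by simp [hBdef]; positivity⟩ (hGcont.norm.continuousOn)
  set L1 := ‖G xL‖ + 1 with hL1def
  have hL1pos : 0 < L1 := by positivity
  have hGB : ∀ x ∈ B, ‖G x‖ ≤ L1 := by
    intro x hx
    have := hxLmax hx
    simp only [Set.mem_setOf_eq] at this
    linarith
  -- uniform continuity of D on B
  have hUC : UniformContinuousOn D B := hBcomp.uniformContinuousOn_of_continuous hDc.continuousOn
  set ε₀ := m2 / (2 * L1) with hε₀def
  have hε₀pos : 0 < ε₀ := by positivity
  obtain ⟨δ, hδpos, hδ⟩ := Metric.uniformContinuousOn_iff.1 hUC ε₀ hε₀pos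
  -- step size
  set h : ℝ := min δ 1 / (2 * L1) with hhdef
  have hhpos : 0 < h := by
    apply div_pos (lt_min hδpos one_pos); positivity
  have hhL1δ : h * L1 < δ := by
    rw [hhdef, div_mul_eq_mul_div, mul_comm]
    rw [div_lt_iff₀ (by positivity)]
    have h1 : min δ 1 ≤ δ := min_le_left _ _
    nlinarith [hδpos]
  have hhL11 : h * L1 ≤ 1 := by
    rw [hhdef, div_mul_eq_mul_div, mul_comm]
    rw [div_le_one (by positivity)]
    have h1 : min δ 1 ≤ 1 := min_le_right _ _
    nlinarith [hδpos, hL1pos]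
  -- cutoff
  set ψ : ℝ → ℝ := fun c => min 1 (max 0 ((c - c₀/2) / (c₀/4))) with hψdef
  have hψcont : Continuous ψ := by
    apply Continuous.min continuous_const
    apply Continuous.max continuous_const
    exact (continuous_id.sub continuous_const).div_const _
  have hψ01 : ∀ c, 0 ≤ ψ c ∧ ψ c ≤ 1 := by
    intro c
    constructor
    · exact le_min zero_le_one (le_max_left _ _)
    · exact min_le_left _ _
  have hψ0 : ∀ c, c ≤ c₀/2 → ψ c = 0 := by
    intro c hc
    rw [hψdef]
    simp only
    rw [max_eq_left, min_eq_right zero_le_one]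
    apply div_nonpos_of_nonpos_of_nonneg <;> linarith
  have hψ1 : ∀ c, 3*c₀/4 ≤ c → ψ c = 1 := by
    intro c hc
    rw [hψdef]
    simp only
    rw [min_eq_left]
    rw [le_max_iff]; right
    rw [le_div_iff₀ (by linarith)]
    linarith
  have hψpos_band : ∀ c, 0 < ψ c → c₀/2 < c := by
    intro c hc
    by_contra hle
    push_neg at hle
    rw [hψ0 c hle] at hc
    exact lt_irrefl 0 hc
  -- the step map
  set Φ : V → V := fun x => x - (h * ψ (E x)) • G x with hΦdef
  have hΦcont : Continuous Φ :=
    continuous_id.sub ((continuous_const.mul (hψcont.comp hEcont)).smul hGcont)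
  -- decrease estimate for one step
  have hstep : ∀ x, E x ≤ M₀ → E (Φ x) ≤ E x - (h * ψ (E x)) * (m2/2) := by
    intro x hx
    by_cases hψx : ψ (E x) = 0
    · simp only [hΦdef, hψx, mul_zero, zero_smul, sub_zero, zero_mul]
      exact le_refl _
    · have hψxpos : 0 < ψ (E x) := lt_of_le_of_ne (hψ01 _).1 (Ne.symm hψx)
      have hxK : x ∈ K := ⟨le_of_lt (hψpos_band _ hψxpos), hx⟩
      set c := h * ψ (E x) with hcdef
      have hcpos : 0 < c := mul_pos hhpos hψxpos
      have hch : c ≤ h := by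
        rw [hcdef]
        nlinarith [(hψ01 (E x)).2]
      set d : V := -(c • G x) with hddef
      have hxB : x ∈ B := hSB x hx
      have hGxL : ‖G x‖ ≤ L1 := hGB x hxB
      have hdnorm_eq : ‖d‖ = c * ‖G x‖ := by
        rw [hddef, norm_neg, norm_smul, Real.norm_eq_abs, abs_of_pos hcpos]
      have hdnorm : ‖d‖ ≤ h * L1 := by
        rw [hdnorm_eq]
        exact mul_le_mul hch hGxL (norm_nonneg _) (le_of_lt hhpos)
      have hgd : ∀ s ∈ Set.uIcc (0:ℝ) 1, HasDerivAt (fun s : ℝ => E (x + s • d)) (D (x + s • d) d) s := by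
        intro s _
        have hpath : HasDerivAt (fun s : ℝ => x + s • d) d s := by
          simpa using ((hasDerivAt_id s).smul_const d).const_add x
        exact (hD (x + s • d)).comp_hasDerivAt s hpath
      have hcont' : Continuous fun s : ℝ => D (x + s • d) d :=
        (hDc.comp (continuous_const.add (continuous_id.smul continuous_const))).clm_apply
          continuous_const
      have hint : IntervalIntegrable (fun s : ℝ => D (x + s • d) d) MeasureTheory.volume 0 1 :=
        hcont'.intervalIntegrable _ _
      have hFTC : ∫ s in (0:ℝ)..1, D (x + s • d) d = E (x + d) - E x := by
        have h := intervalIntegral.integral_eq_sub_of_hasDerivAt hgd hint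
        simp only [one_smul, zero_smul, add_zero] at h
        exact h
      have hbound : ∀ s ∈ Set.Icc (0:ℝ) 1, D (x + s • d) d ≤ -(c * (m2/2)) := by
        intro s hs
        have hs0 : 0 ≤ s := hs.1
        have hs1 : s ≤ 1 := hs.2
        have hsd : ‖s • d‖ ≤ ‖d‖ := by
          rw [norm_smul, Real.norm_eq_abs, abs_of_nonneg hs0]
          nlinarith [norm_nonneg d]
        have hsB : x + s • d ∈ B := by
          simp only [hBdef, Metric.mem_closedBall, dist_zero_right]
          calc ‖x + s • d‖ ≤ ‖x‖ + ‖s • d‖ := norm_add_le _ _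
            _ ≤ R + 1 := by
                have h1 : ‖x‖ ≤ R := hR x hx
                have h2 : ‖s • d‖ ≤ 1 := le_trans hsd (le_trans hdnorm hhL11)
                linarith
        have hdist : dist (x + s • d) x < δ := by
          rw [dist_eq_norm]
          simp only [add_sub_cancel_left]
          exact lt_of_le_of_lt (le_trans hsd hdnorm) hhL1δ
        have hop : ‖D (x + s • d) - D x‖ < ε₀ := by
          have := hδ (x + s • d) hsB x hxB hdist
          rwa [dist_eq_norm] at this
        have hDxd : D x d = -(c * Q x) := by
          rw [hddef, map_neg, map_smul, smul_eq_mul, hDG]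
        have hsplit : D (x + s • d) d = D x d + (D (x + s • d) - D x) d := by
          rw [ContinuousLinearMap.sub_apply]; ring
        have herr : (D (x + s • d) - D x) d ≤ ε₀ * (c * ‖G x‖) := by
          calc (D (x + s • d) - D x) d ≤ ‖D (x + s • d) - D x‖ * ‖d‖ := by
                have := (D (x + s • d) - D x).le_opNorm d
                exact le_trans (le_abs_self _) this
            _ ≤ ε₀ * (c * ‖G x‖) := by
                rw [hdnorm_eq]
                apply mul_le_mul (le_of_lt hop) (le_refl _) (by positivity) (le_of_lt hε₀pos)
        have hQx : m2 ≤ Q x := hQK x hxK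
        have hεL : ε₀ * L1 = m2 / 2 := by
          rw [hε₀def]; field_simp
        rw [hsplit, hDxd]
        have h1 : ε₀ * (c * ‖G x‖) ≤ c * (m2/2) := by
          have : ε₀ * (c * ‖G x‖) ≤ ε₀ * (c * L1) := by
            apply mul_le_mul_of_nonneg_left _ (le_of_lt hε₀pos)
            exact mul_le_mul_of_nonneg_left hGxL (le_of_lt hcpos)
          calc ε₀ * (c * ‖G x‖) ≤ ε₀ * (c * L1) := this
            _ = c * (ε₀ * L1) := by ring
            _ = c * (m2/2) := by rw [hεL]
        nlinarith [hQx, hcpos, h1]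
      have hintle : ∫ s in (0:ℝ)..1, D (x + s • d) d ≤ -(c * (m2/2)) := by
        have hconst : IntervalIntegrable (fun _ : ℝ => -(c * (m2/2))) MeasureTheory.volume 0 1 :=
          intervalIntegrable_const
        have := intervalIntegral.integral_mono_on (by norm_num : (0:ℝ) ≤ 1) hint hconst hbound
        simpa using this
      have hΦeq : Φ x = x + d := by
        rw [hΦdef, hddef]
        simp [sub_eq_add_neg, hcdef]
      rw [hΦeq]
      have : E (x + d) - E x ≤ -(c * (m2/2)) := hFTC ▸ hintle
      linarith
  have hηpos : 0 < h * (m2/2) := by positivity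
  set η := h * (m2/2) with hηdef
  have hΦdec : ∀ x, E x ≤ M₀ → E (Φ x) ≤ E x := by
    intro x hx
    have := hstep x hx
    nlinarith [(hψ01 (E x)).1, hm2pos, hhpos]
  have hstep34 : ∀ x, E x ≤ M₀ → 3*c₀/4 ≤ E x → E (Φ x) ≤ E x - η := by
    intro x hx h34
    have := hstep x hx
    rw [hψ1 _ h34] at this
    rw [hηdef]
    linarith
  have h34M : 3*c₀/4 ≤ M₀ := by linarith
  -- iteration
  have hiter : ∀ (j : ℕ) (x : V), E x ≤ M₀ → E (Φ^[j] x) ≤ max (3*c₀/4) (E x - j * η) := by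
    intro j
    induction j with
    | zero =>
      intro x hx
      simpa using le_max_right (3*c₀/4) (E x)
    | succ j ih =>
      intro x hx
      rw [Function.iterate_succ_apply']
      have hy := ih x hx
      have hyM : E (Φ^[j] x) ≤ M₀ := by
        apply le_trans hy
        apply max_le h34M
        have : 0 ≤ (j:ℝ) * η := by positivity
        linarith
      by_cases h34 : 3*c₀/4 ≤ E (Φ^[j] x)
      · have hd := hstep34 _ hyM h34
        have h2 : E (Φ (Φ^[j] x)) ≤ max (3*c₀/4) (E x - j * η) - η := by linarith
        apply le_trans h2
        rcases le_total (3*c₀/4) (E x - j * η) with hc | hc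
        · rw [max_eq_right hc]
          have : E x - (j:ℝ) * η - η = E x - ((j:ℝ)+1) * η := by ring
          rw [this]
          push_cast
          exact le_max_right _ _
        · rw [max_eq_left hc]
          apply le_trans _ (le_max_left _ _)
          linarith
      · push_neg at h34
        have := hΦdec _ hyM
        apply le_trans this
        exact le_trans (le_of_lt h34) (le_max_left _ _)
  -- choose N and conclude
  obtain ⟨N, hN⟩ := exists_nat_gt ((M₀ - 3*c₀/4) / η)
  have hNη : M₀ - 3*c₀/4 < N * η := by
    rw [div_lt_iff₀ hηpos] at hN
    linarith
  have hfix : ∀ u : V, E u ≤ c₀/2 → Φ u = u := by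
    intro u hu
    rw [hΦdef]
    simp [hψ0 _ hu]
  have hΦiter : ∀ m : ℕ, Continuous (Φ^[m]) := by
    intro m
    induction m with
    | zero => simpa using continuous_id
    | succ k ihk => rw [Function.iterate_succ]; exact ihk.comp hΦcont
  obtain ⟨t, ht, hct⟩ := hring (fun t => Φ^[N] (γ₀ t)) ((hΦiter N).comp hγ₀cont)
    (by show Φ^[N] (γ₀ 0) = a
        rw [hγ₀0]; exact Function.iterate_fixed (hfix a (by linarith)) N)
    (by show Φ^[N] (γ₀ 1) = b
        rw [hγ₀1]; exact Function.iterate_fixed (hfix b (by linarith)) N)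
  have hEt : E (Φ^[N] (γ₀ t)) ≤ max (3*c₀/4) (E (γ₀ t) - N * η) :=
    hiter N (γ₀ t) (hseg_le t ht)
  have : E (Φ^[N] (γ₀ t)) ≤ 3*c₀/4 := by
    apply le_trans hEt
    apply max_le (le_refl _)
    have := hseg_le t ht
    linarith
  linarith

end MPT

section Setup

variable {T : ℕ}

noncomputable def ecoord (T : ℕ) (k : ℕ) : (Fin T → ℝ) →L[ℝ] ℝ :=
  if h : 1 ≤ k ∧ k ≤ T then ContinuousLinearMap.proj (⟨k-1, by omega⟩ : Fin T) else 0

noncomputable def extV {T : ℕ} (x : Fin T → ℝ) : ℕ → ℝ := fun k => ecoord T k x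

lemma extV_zero (x : Fin T → ℝ) : extV x 0 = 0 := by
  simp [extV, ecoord]

lemma extV_top (x : Fin T → ℝ) : extV x (T+1) = 0 := by
  have : ¬ (1 ≤ T+1 ∧ T+1 ≤ T) := by omega
  simp [extV, ecoord, this]

lemma extV_mem (x : Fin T → ℝ) (k : ℕ) (h1 : 1 ≤ k) (h2 : k ≤ T) :
    extV x k = x ⟨k-1, by omega⟩ := by
  simp [extV, ecoord, h1, h2, ContinuousLinearMap.proj_apply]

lemma extV_succ (x : Fin T → ℝ) (i : Fin T) : extV x (i.1+1) = x i := by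
  rw [extV_mem x _ (by omega) (by omega)]
  congr 1

lemma extV_of_zero : extV (0 : Fin T → ℝ) = fun _ => 0 := by
  funext k
  simp [extV]

/-- The energy functional on the finite-dimensional model. -/
noncomputable def EV (T : ℕ) (p : ℕ → ℝ) (f : ℕ → ℝ → ℝ) (lam : ℝ) (x : Fin T → ℝ) : ℝ :=
  muF T p (extV x) - lam * ∑ k ∈ Finset.Icc 1 T, Fint f k (extV x k)

/-- Its derivative. -/
noncomputable def DV (T : ℕ) (p : ℕ → ℝ) (f : ℕ → ℝ → ℝ) (lam : ℝ) (x : Fin T → ℝ) :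
    (Fin T → ℝ) →L[ℝ] ℝ :=
  (∑ k ∈ Finset.Icc 1 (T+1),
    phiD (p (k-1)) (extV x k - extV x (k-1)) • (ecoord T k - ecoord T (k-1)))
  - lam • (∑ k ∈ Finset.Icc 1 T, f k (extV x k) • ecoord T k)

lemma mem_Icc_T1 {k : ℕ} (hk : k ∈ Finset.Icc 1 (T+1)) : k - 1 ≤ T := by
  simp only [Finset.mem_Icc] at hk; omega

lemma hasFDerivAt_EV (p : ℕ → ℝ) (hp : ∀ k ≤ T + 1, 1 < p k)
    (f : ℕ → ℝ → ℝ) (hf : ∀ k, 1 ≤ k → k ≤ T → Continuous (f k)) (lam : ℝ)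
    (x : Fin T → ℝ) : HasFDerivAt (EV T p f lam) (DV T p f lam x) x := by
  have hmu : HasFDerivAt (fun y : Fin T → ℝ => muF T p (extV y))
      (∑ k ∈ Finset.Icc 1 (T+1),
        phiD (p (k-1)) (extV x k - extV x (k-1)) • (ecoord T k - ecoord T (k-1))) x := by
    have : (fun y : Fin T → ℝ => muF T p (extV y)) =
        (fun y => ∑ k ∈ Finset.Icc 1 (T+1),
          (1 / p (k-1)) * |(ecoord T k - ecoord T (k-1)) y| ^ (p (k-1))) := by
      funext y
      unfold muF extV
      simp [ContinuousLinearMap.sub_apply]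
    rw [this]
    apply HasFDerivAt.fun_sum
    intro k hk
    have hq : 1 < p (k-1) := hp _ (le_trans (mem_Icc_T1 hk) (by omega))
    have hL : HasFDerivAt (fun y : Fin T → ℝ => (ecoord T k - ecoord T (k-1)) y)
        (ecoord T k - ecoord T (k-1)) x := (ecoord T k - ecoord T (k-1)).hasFDerivAt
    have hcomp := (hasDerivAt_phiD hq ((ecoord T k - ecoord T (k-1)) x)).comp_hasFDerivAt x hL
    have := hcomp.const_mul (1 / p (k-1))
    have hcoef : (1 / p (k-1)) • ((p (k-1) * phiD (p (k-1)) ((ecoord T k - ecoord T (k-1)) x))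
        • (ecoord T k - ecoord T (k-1)))
        = phiD (p (k-1)) (extV x k - extV x (k-1)) • (ecoord T k - ecoord T (k-1)) := by
      rw [smul_smul]
      congr 1
      have hpne : p (k-1) ≠ 0 := by linarith
      have : (ecoord T k - ecoord T (k-1)) x = extV x k - extV x (k-1) := by
        simp [extV, ContinuousLinearMap.sub_apply]
      rw [this] at *
      field_simp
    rw [hcoef] at this
    exact this
  have hJ : HasFDerivAt (fun y : Fin T → ℝ => ∑ k ∈ Finset.Icc 1 T, Fint f k (extV y k))
      (∑ k ∈ Finset.Icc 1 T, f k (extV x k) • ecoord T k) x := by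
    apply HasFDerivAt.fun_sum
    intro k hk
    simp only [Finset.mem_Icc] at hk
    have hLk : HasFDerivAt (fun y : Fin T → ℝ => ecoord T k y) (ecoord T k) x :=
      (ecoord T k).hasFDerivAt
    exact (hasDerivAt_Fint (hf k hk.1 hk.2) (ecoord T k x)).comp_hasFDerivAt x hLk
  have := hmu.sub (hJ.const_mul lam)
  exact this

lemma continuous_DV (p : ℕ → ℝ) (hp : ∀ k ≤ T + 1, 1 < p k)
    (f : ℕ → ℝ → ℝ) (hf : ∀ k, 1 ≤ k → k ≤ T → Continuous (f k)) (lam : ℝ) :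
    Continuous (DV T p f lam) := by
  unfold DV
  apply Continuous.sub
  · apply continuous_finset_sum
    intro k hk
    have hq : 1 < p (k-1) := hp _ (le_trans (mem_Icc_T1 hk) (by omega))
    apply Continuous.fun_smul _ continuous_const
    exact (continuous_phiD hq).comp
      (((ecoord T k).continuous.sub (ecoord T (k-1)).continuous))
  · apply Continuous.fun_const_smul
    apply continuous_finset_sum
    intro k hk
    simp only [Finset.mem_Icc] at hk
    exact Continuous.smul ((hf k hk.1 hk.2).comp (ecoord T k).continuous) continuous_const

lemma crit_of_DV_eq_zero (p : ℕ → ℝ) (f : ℕ → ℝ → ℝ) (lam : ℝ) (x : Fin T → ℝ)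
    (hx : DV T p f lam x = 0) : IsCriticalPoint T p f lam (extV x) := by
  refine ⟨extV_zero x, extV_top x, ?_⟩
  intro v hv0 hvT
  set xv : Fin T → ℝ := fun i => v (i.1+1) with hxvdef
  have hext : ∀ k ≤ T+1, extV xv k = v k := by
    intro k hk
    rcases Nat.eq_zero_or_pos k with h0 | hpos
    · subst h0; rw [extV_zero, hv0]
    · by_cases hkT : k ≤ T
      · rw [extV_mem xv k hpos hkT, hxvdef]
        simp only
        congr 1
        omega
      · have : k = T+1 := by omega
        subst this
        rw [extV_top, hvT]
    
  have happ : DV T p f lam x xv = 0 := by rw [hx]; rfl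
  unfold DV at happ
  simp only [ContinuousLinearMap.sub_apply, ContinuousLinearMap.sum_apply,
    ContinuousLinearMap.smul_apply, smul_eq_mul] at happ
  have hLHS : ∀ k ∈ Finset.Icc 1 (T+1),
      phiD (p (k-1)) (extV x k - extV x (k-1)) * (ecoord T k xv - ecoord T (k-1) xv)
      = |extV x k - extV x (k-1)| ^ (p (k-1) - 2) * (extV x k - extV x (k-1)) * (v k - v (k-1)) := by
    intro k hk
    simp only [Finset.mem_Icc] at hk
    have h1 : ecoord T k xv - ecoord T (k-1) xv = v k - v (k-1) := by
      have e1 : ecoord T k xv = extV xv k := rfl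
      have e2 : ecoord T (k-1) xv = extV xv (k-1) := rfl
      rw [e1, e2, hext k (by omega), hext (k-1) (by omega)]
    rw [h1, phiD]
  have hRHS : ∀ k ∈ Finset.Icc 1 T, f k (extV x k) * ecoord T k xv = f k (extV x k) * v k := by
    intro k hk
    simp only [Finset.mem_Icc] at hk
    have : ecoord T k xv = v k := by
      have : ecoord T k xv = extV xv k := rfl
      rw [this, hext k (by omega)]
    rw [this]
  rw [Finset.sum_congr rfl hLHS, Finset.sum_congr rfl hRHS] at happ
  linarith [happ]

end Setup




section Estimates

variable {T : ℕ} {p : ℕ → ℝ}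

lemma muF_nonneg (hp : ∀ k ≤ T + 1, 1 < p k) (u : ℕ → ℝ) : 0 ≤ muF T p u := by
  apply Finset.sum_nonneg
  intro k hk
  simp only [Finset.mem_Icc] at hk
  have h1 : 1 < p (k-1) := hp _ (by omega)
  positivity

lemma muF_zero_fn (hp : ∀ k ≤ T + 1, 1 < p k) : muF T p (fun _ => 0) = 0 := by
  apply Finset.sum_eq_zero
  intro k hk
  simp only [Finset.mem_Icc] at hk
  have h1 : 1 < p (k-1) := hp _ (by omega)
  rw [sub_zero, abs_zero, Real.zero_rpow (by linarith)]
  ring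

lemma term_le_muF (hp : ∀ k ≤ T + 1, 1 < p k) (u : ℕ → ℝ) {k : ℕ}
    (hk : k ∈ Finset.Icc 1 (T+1)) :
    (1 / p (k-1)) * |u k - u (k-1)| ^ p (k-1) ≤ muF T p u := by
  apply Finset.single_le_sum _ hk
  intro j hj
  simp only [Finset.mem_Icc] at hj
  have h1 : 1 < p (j-1) := hp _ (by omega)
  positivity

lemma rpow_self_le {a c q : ℝ} (ha : 0 ≤ a) (hq : 1 ≤ q) (h : a ^ q ≤ c) :
    a ≤ max 1 c := by
  rcases le_or_gt a 1 with h1 | h1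
  · exact le_trans h1 (le_max_left _ _)
  · apply le_trans _ (le_max_right _ _)
    calc a = a ^ (1:ℝ) := (Real.rpow_one a).symm
      _ ≤ a ^ q := Real.rpow_le_rpow_of_exponent_le (le_of_lt h1) hq
      _ ≤ c := h

lemma abs_diff_rpow_le_muF (hp : ∀ k ≤ T + 1, 1 < p k) {pM : ℝ}
    (hpM : ∀ k ≤ T + 1, p k ≤ pM) (u : ℕ → ℝ) {M : ℝ} (hM : 0 ≤ M)
    (hmu : muF T p u ≤ M) {k : ℕ} (hk : k ∈ Finset.Icc 1 (T+1)) :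
    |u k - u (k-1)| ^ p (k-1) ≤ pM * M := by
  have hkT : k - 1 ≤ T := by simp only [Finset.mem_Icc] at hk; omega
  have h1 : 1 < p (k-1) := hp _ (by omega)
  have h2 := term_le_muF hp u hk
  have h3 : (1 / p (k-1)) * |u k - u (k-1)| ^ p (k-1) ≤ M := le_trans h2 hmu
  have h4 : |u k - u (k-1)| ^ p (k-1) ≤ p (k-1) * M := by
    rw [div_mul_eq_mul_div, one_mul, div_le_iff₀ (by linarith)] at h3
    linarith [h3]
  apply le_trans h4
  apply mul_le_mul_of_nonneg_right (hpM _ (by omega)) hM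

lemma telescope_abs (u : ℕ → ℝ) (hu0 : u 0 = 0) {k : ℕ} (hk : k ≤ T + 1) :
    |u k| ≤ ∑ j ∈ Finset.Icc 1 (T+1), |u j - u (j-1)| := by
  have aux : ∀ m : ℕ, |u m| ≤ ∑ j ∈ Finset.Icc 1 m, |u j - u (j-1)| := by
    intro m
    induction m with
    | zero => simp [hu0]
    | succ i ih =>
      rw [Finset.sum_Icc_succ_top (by omega : 1 ≤ i + 1)]
      have : |u (i+1)| ≤ |u i| + |u (i+1) - u i| := by
        have := abs_add_le (u i) (u (i+1) - u i)
        simpa using this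
      simp only [Nat.add_sub_cancel]
      linarith
  apply le_trans (aux k)
  apply Finset.sum_le_sum_of_subset_of_nonneg
  · intro j hj
    simp only [Finset.mem_Icc] at *
    omega
  · intro j _ _
    exact abs_nonneg _

lemma value_bound (hp : ∀ k ≤ T + 1, 1 < p k) {pM : ℝ}
    (hpM : ∀ k ≤ T + 1, p k ≤ pM) (u : ℕ → ℝ) (hu0 : u 0 = 0) {M : ℝ} (hM : 0 ≤ M)
    (hmu : muF T p u ≤ M) {k : ℕ} (hk : k ≤ T + 1) :
    |u k| ≤ (T+1 : ℝ) * max 1 (pM * M) := by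
  apply le_trans (telescope_abs u hu0 hk)
  have hcard : (Finset.Icc 1 (T+1)).card = T + 1 := by
    rw [Nat.card_Icc]; omega
  calc ∑ j ∈ Finset.Icc 1 (T+1), |u j - u (j-1)|
      ≤ ∑ _j ∈ Finset.Icc 1 (T+1), max 1 (pM * M) := by
        apply Finset.sum_le_sum
        intro j hj
        have h1 : 1 < p (j-1) := by
          simp only [Finset.mem_Icc] at hj
          exact hp _ (by omega)
        exact rpow_self_le (abs_nonneg _) (by linarith)
          (abs_diff_rpow_le_muF hp hpM u hM hmu hj)
    _ = (T+1 : ℝ) * max 1 (pM * M) := by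
        rw [Finset.sum_const, hcard, nsmul_eq_mul]
        push_cast
        ring

lemma sum_abs_rpow_le (hp : ∀ k ≤ T + 1, 1 < p k) {pM pm : ℝ}
    (hpM : ∀ k ≤ T + 1, p k ≤ pM) (hpm1 : 1 < pm) (hpmle : ∀ k ≤ T + 1, pm ≤ p k)
    (u : ℕ → ℝ) (hu0 : u 0 = 0) :
    ∑ k ∈ Finset.Icc 1 T, |u k| ^ pm ≤
      (T : ℝ) * ((T+1:ℝ) ^ pm * ((T+1 : ℝ) + pM * muF T p u)) := by
  -- Σ_j |Δ_j|^pm ≤ (T+1) + pM μ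
  have hstep1 : ∑ j ∈ Finset.Icc 1 (T+1), |u j - u (j-1)| ^ pm ≤ (T+1 : ℝ) + pM * muF T p u := by
    have hterm : ∀ j ∈ Finset.Icc 1 (T+1), |u j - u (j-1)| ^ pm ≤ 1 + |u j - u (j-1)| ^ p (j-1) := by
      intro j hj
      simp only [Finset.mem_Icc] at hj
      rcases le_or_gt (|u j - u (j-1)|) 1 with h1 | h1
      · have := Real.rpow_le_one (abs_nonneg _) h1 (by linarith : (0:ℝ) ≤ pm)
        have h2 : (0:ℝ) ≤ |u j - u (j-1)| ^ p (j-1) := Real.rpow_nonneg (abs_nonneg _) _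
        linarith
      · have := Real.rpow_le_rpow_of_exponent_le (le_of_lt h1) (hpmle (j-1) (by omega))
        linarith
    calc ∑ j ∈ Finset.Icc 1 (T+1), |u j - u (j-1)| ^ pm
        ≤ ∑ j ∈ Finset.Icc 1 (T+1), (1 + |u j - u (j-1)| ^ p (j-1)) := Finset.sum_le_sum hterm
      _ = (T+1 : ℝ) + ∑ j ∈ Finset.Icc 1 (T+1), |u j - u (j-1)| ^ p (j-1) := by
          rw [Finset.sum_add_distrib, Finset.sum_const, Nat.card_Icc]
          push_cast
          ring
      _ ≤ (T+1 : ℝ) + pM * muF T p u := by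
          have : ∑ j ∈ Finset.Icc 1 (T+1), |u j - u (j-1)| ^ p (j-1) ≤ pM * muF T p u := by
            have heq : ∀ j ∈ Finset.Icc 1 (T+1), |u j - u (j-1)| ^ p (j-1)
                = p (j-1) * ((1 / p (j-1)) * |u j - u (j-1)| ^ p (j-1)) := by
              intro j hj
              simp only [Finset.mem_Icc] at hj
              have h1 : 1 < p (j-1) := hp _ (by omega)
              field_simp
            rw [Finset.sum_congr rfl heq]
            unfold muF
            rw [Finset.mul_sum]
            apply Finset.sum_le_sum
            intro j hj
            simp only [Finset.mem_Icc] at hj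
            have h1 : 1 < p (j-1) := hp _ (by omega)
            apply mul_le_mul_of_nonneg_right (hpM _ (by omega))
            positivity
          linarith
  -- A := Σ|Δ|, A^pm ≤ (T+1)^pm Σ |Δ|^pm
  have hA : (∑ j ∈ Finset.Icc 1 (T+1), |u j - u (j-1)|) ^ pm
      ≤ (T+1:ℝ) ^ pm * ∑ j ∈ Finset.Icc 1 (T+1), |u j - u (j-1)| ^ pm := by
    obtain ⟨j₀, hj₀mem, hj₀max⟩ := Finset.exists_max_image (Finset.Icc 1 (T+1))
      (fun j => |u j - u (j-1)|) ⟨1, by simp⟩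
    have hAle : ∑ j ∈ Finset.Icc 1 (T+1), |u j - u (j-1)| ≤ (T+1:ℝ) * |u j₀ - u (j₀-1)| := by
      calc ∑ j ∈ Finset.Icc 1 (T+1), |u j - u (j-1)|
          ≤ ∑ _j ∈ Finset.Icc 1 (T+1), |u j₀ - u (j₀-1)| :=
            Finset.sum_le_sum (fun j hj => hj₀max j hj)
        _ = (T+1:ℝ) * |u j₀ - u (j₀-1)| := by
            rw [Finset.sum_const, Nat.card_Icc, nsmul_eq_mul]
            push_cast; ring
    calc (∑ j ∈ Finset.Icc 1 (T+1), |u j - u (j-1)|) ^ pm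
        ≤ ((T+1:ℝ) * |u j₀ - u (j₀-1)|) ^ pm := by
          apply Real.rpow_le_rpow (Finset.sum_nonneg (fun j _ => abs_nonneg _)) hAle
            (by linarith)
      _ = (T+1:ℝ) ^ pm * |u j₀ - u (j₀-1)| ^ pm := by
          rw [Real.mul_rpow (by positivity) (abs_nonneg _)]
      _ ≤ (T+1:ℝ) ^ pm * ∑ j ∈ Finset.Icc 1 (T+1), |u j - u (j-1)| ^ pm := by
          apply mul_le_mul_of_nonneg_left _ (by positivity)
          apply Finset.single_le_sum (fun j _ => Real.rpow_nonneg (abs_nonneg _) _) hj₀mem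
  have hk_each : ∀ k ∈ Finset.Icc 1 T, |u k| ^ pm
      ≤ (T+1:ℝ) ^ pm * ((T+1 : ℝ) + pM * muF T p u) := by
    intro k hk
    simp only [Finset.mem_Icc] at hk
    have h1 : |u k| ≤ ∑ j ∈ Finset.Icc 1 (T+1), |u j - u (j-1)| :=
      telescope_abs u hu0 (by omega)
    have h2 : |u k| ^ pm ≤ (∑ j ∈ Finset.Icc 1 (T+1), |u j - u (j-1)|) ^ pm :=
      Real.rpow_le_rpow (abs_nonneg _) h1 (by linarith)
    apply le_trans h2 (le_trans hA _)
    exact mul_le_mul_of_nonneg_left hstep1 (by positivity)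
  calc ∑ k ∈ Finset.Icc 1 T, |u k| ^ pm
      ≤ ∑ _k ∈ Finset.Icc 1 T, (T+1:ℝ) ^ pm * ((T+1 : ℝ) + pM * muF T p u) :=
        Finset.sum_le_sum hk_each
    _ = (T : ℝ) * ((T+1:ℝ) ^ pm * ((T+1 : ℝ) + pM * muF T p u)) := by
        rw [Finset.sum_const, Nat.card_Icc, nsmul_eq_mul]
        push_cast; ring

end Estimates

section SupSets

variable {T : ℕ} {p : ℕ → ℝ}

def SNset (T : ℕ) (u : ℕ → ℝ) : Set ℝ := {x : ℝ | ∃ k, 1 ≤ k ∧ k ≤ T ∧ x = |u k|}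

lemma SNset_eq (u : ℕ → ℝ) : SNset T u = (fun k => |u k|) '' (Set.Icc 1 T) := by
  ext y
  constructor
  · rintro ⟨k, h1, h2, rfl⟩
    exact ⟨k, ⟨h1, h2⟩, rfl⟩
  · rintro ⟨k, ⟨h1, h2⟩, rfl⟩
    exact ⟨k, h1, h2, rfl⟩

lemma SNset_finite (u : ℕ → ℝ) : (SNset T u).Finite := by
  rw [SNset_eq]
  exact (Set.finite_Icc 1 T).image _

lemma SNset_nonempty (hT : 1 ≤ T) (u : ℕ → ℝ) : (SNset T u).Nonempty :=
  ⟨|u 1|, 1, le_refl 1, hT, rfl⟩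

lemma supNorm_mem (hT : 1 ≤ T) (u : ℕ → ℝ) : supNorm T u ∈ SNset T u :=
  Set.Nonempty.csSup_mem (SNset_nonempty hT u) (SNset_finite u)

lemma le_supNorm (hT : 1 ≤ T) (u : ℕ → ℝ) {k : ℕ} (h1 : 1 ≤ k) (h2 : k ≤ T) :
    |u k| ≤ supNorm T u :=
  le_csSup (SNset_finite u).bddAbove ⟨k, h1, h2, rfl⟩

lemma supNorm_nonneg (hT : 1 ≤ T) (u : ℕ → ℝ) : 0 ≤ supNorm T u :=
  le_trans (abs_nonneg (u 1)) (le_supNorm hT u (le_refl 1) hT)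

lemma supNorm_zero_fn (hT : 1 ≤ T) : supNorm T (fun _ => 0) = 0 := by
  obtain ⟨k, _, _, hk⟩ := supNorm_mem hT (fun _ => 0)
  simpa using hk

def SPset (T : ℕ) (p : ℕ → ℝ) (s : ℝ) : Set ℝ :=
  {x : ℝ | ∃ u : ℕ → ℝ, u 0 = 0 ∧ u (T + 1) = 0 ∧ muF T p u ≤ s ∧ x = supNorm T u}

lemma SPset_bddAbove (hT : 1 ≤ T) (hp : ∀ k ≤ T + 1, 1 < p k) {pM : ℝ}
    (hpM : ∀ k ≤ T + 1, p k ≤ pM) {s : ℝ} (hs : 0 ≤ s) : BddAbove (SPset T p s) := by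
  use (T+1 : ℝ) * max 1 (pM * s)
  rintro y ⟨u, hu0, huT, hmu, rfl⟩
  obtain ⟨k, h1, h2, hk⟩ := supNorm_mem hT u
  rw [hk]
  exact value_bound hp hpM u hu0 hs hmu (by omega)

lemma le_sPrime (hT : 1 ≤ T) (hp : ∀ k ≤ T + 1, 1 < p k) {pM : ℝ}
    (hpM : ∀ k ≤ T + 1, p k ≤ pM) {s : ℝ} (hs : 0 ≤ s) (u : ℕ → ℝ)
    (hu0 : u 0 = 0) (huT : u (T+1) = 0) (hmu : muF T p u ≤ s) :
    supNorm T u ≤ sPrime T p s :=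
  le_csSup (SPset_bddAbove hT hp hpM hs) ⟨u, hu0, huT, hmu, rfl⟩

lemma sPrime_nonneg (hT : 1 ≤ T) (hp : ∀ k ≤ T + 1, 1 < p k) {pM : ℝ}
    (hpM : ∀ k ≤ T + 1, p k ≤ pM) {s : ℝ} (hs : 0 ≤ s) : 0 ≤ sPrime T p s := by
  have h := le_sPrime hT hp hpM hs (fun _ => 0) rfl rfl (by rw [muF_zero_fn hp]; exact hs)
  rwa [supNorm_zero_fn hT] at h

lemma rPrime_le (hT : 1 ≤ T) {r : ℝ} (u : ℕ → ℝ)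
    (hu0 : u 0 = 0) (huT : u (T+1) = 0) (hmu : r ≤ muF T p u) :
    rPrime T p r ≤ supNorm T u := by
  apply csInf_le
  · use 0
    rintro y ⟨v, hv0, hvT, hmv, rfl⟩
    exact supNorm_nonneg hT v
  · exact ⟨u, hu0, huT, hmu, rfl⟩

lemma supFle_bddAbove {f : ℕ → ℝ → ℝ} {k : ℕ} (hf : Continuous (f k)) {σ : ℝ} (hσ : 0 ≤ σ) :
    BddAbove {y : ℝ | ∃ t : ℝ, |t| ≤ σ ∧ y = Fint f k t} := by
  have heq : {y : ℝ | ∃ t : ℝ, |t| ≤ σ ∧ y = Fint f k t} = Fint f k '' (Set.Icc (-σ) σ) := by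
    ext y
    constructor
    · rintro ⟨t, ht, rfl⟩
      exact ⟨t, abs_le.1 ht, rfl⟩
    · rintro ⟨t, ht, rfl⟩
      exact ⟨t, abs_le.2 ht, rfl⟩
  rw [heq]
  exact (isCompact_Icc.image (continuous_Fint hf)).bddAbove

lemma supFle_nonneg {f : ℕ → ℝ → ℝ} {k : ℕ} (hf : Continuous (f k)) {σ : ℝ} (hσ : 0 ≤ σ) :
    0 ≤ supFle f k σ := by
  apply le_csSup (supFle_bddAbove hf hσ)
  exact ⟨0, by simpa using hσ, (Fint_zero f k).symm⟩

lemma le_supFle {f : ℕ → ℝ → ℝ} {k : ℕ} (hf : Continuous (f k)) {σ t : ℝ} (hσ : 0 ≤ σ)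
    (ht : |t| ≤ σ) : Fint f k t ≤ supFle f k σ :=
  le_csSup (supFle_bddAbove hf hσ) ⟨t, ht, rfl⟩

lemma le_supFbetween {f : ℕ → ℝ → ℝ} {k : ℕ} (hf : Continuous (f k)) {ρ σ t : ℝ} (hσ : 0 ≤ σ)
    (hρ : ρ ≤ |t|) (ht : |t| ≤ σ) : Fint f k t ≤ supFbetween f k ρ σ := by
  refine le_csSup ?_ ⟨t, hρ, ht, rfl⟩
  apply BddAbove.mono _ (supFle_bddAbove hf hσ)
  rintro y ⟨t', h1, h2, rfl⟩
  exact ⟨t', h2, rfl⟩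

end SupSets

theorem stmt17 (T : ℕ) (hT : 1 ≤ T) (p : ℕ → ℝ) (hp : ∀ k ≤ T + 1, 1 < p k)
    (pm : ℝ) (hpm : IsLeast (p '' Set.Icc 0 (T + 1)) pm)
    (f : ℕ → ℝ → ℝ) (hf : ∀ k, 1 ≤ k → k ≤ T → Continuous (f k))
    (r s : ℝ) (hr : 0 < r) (hrs : r < s)
    -- (1): limsup_{|t|→∞} F(k,t)/|t|^{p⁻} ≤ 0
    (h1 : ∀ k, 1 ≤ k → k ≤ T → ∀ ε : ℝ, 0 < ε → ∃ K > (0:ℝ), ∀ t : ℝ, K < |t| →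
      Fint f k t ≤ ε * |t| ^ pm)
    -- (2): Σ_k sup_{|t|≤s′} F(k,t) < Σ_k sup_{t∈ℝ} F(k,t)
    (h2 : ∃ t : ℕ → ℝ, ∑ k ∈ Finset.Icc 1 T, supFle f k (sPrime T p s) <
      ∑ k ∈ Finset.Icc 1 T, Fint f k (t k))
    -- (3): sup_{r′≤|t|≤s′} F(k,t) ≤ −Σ_{h≠k} sup_{|t|≤s′} F(h,t)
    (h3 : ∀ k, 1 ≤ k → k ≤ T →
      supFbetween f k (rPrime T p r) (sPrime T p s) ≤
        -∑ j ∈ (Finset.Icc 1 T).erase k, supFle f j (sPrime T p s)) :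
    ∃ lamStar > (0:ℝ), ∃ u₁ u₂ u₃ : ℕ → ℝ,
      IsCriticalPoint T p f lamStar u₁ ∧ IsCriticalPoint T p f lamStar u₂ ∧
      IsCriticalPoint T p f lamStar u₃ ∧
      DistinctH T u₁ u₂ ∧ DistinctH T u₁ u₃ ∧ DistinctH T u₂ u₃ ∧
      NonzeroH T u₂ ∧ NonzeroH T u₃ := by
  classical
  have hs0 : 0 < s := lt_trans hr hrs
  -- pM : upper bound for p
  obtain ⟨pM, hpM⟩ : ∃ pM : ℝ, ∀ k ≤ T + 1, p k ≤ pM := by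
    refine ⟨((Finset.Icc 0 (T+1)).image p).max' ⟨p 0, Finset.mem_image_of_mem p (by simp)⟩, ?_⟩
    intro k hk
    apply Finset.le_max'
    exact Finset.mem_image_of_mem p (Finset.mem_Icc.2 ⟨Nat.zero_le _, hk⟩)
  have hpM1 : 1 < pM := lt_of_lt_of_le (hp 0 (by omega)) (hpM 0 (by omega))
  have hpm1 : 1 < pm := by
    obtain ⟨k0, hk0, hpk⟩ := hpm.1
    rw [← hpk]
    exact hp k0 hk0.2
  have hpmle : ∀ k ≤ T + 1, pm ≤ p k := fun k hk =>
    hpm.2 ⟨k, Set.mem_Icc.2 ⟨Nat.zero_le _, hk⟩, rfl⟩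
  have hsPnn : 0 ≤ sPrime T p s := sPrime_nonneg hT hp hpM (le_of_lt hs0)
  -- ring estimate : the nonlinear potential is ≤ 0 on the annulus r ≤ μ ≤ s
  have hringF : ∀ x : Fin T → ℝ, r ≤ muF T p (extV x) → muF T p (extV x) ≤ s →
      ∑ k ∈ Finset.Icc 1 T, Fint f k (extV x k) ≤ 0 := by
    intro x hxr hxs
    have hu0 := extV_zero x
    have huT := extV_top x
    have hsP : supNorm T (extV x) ≤ sPrime T p s :=
      le_sPrime hT hp hpM (le_of_lt hs0) (extV x) hu0 huT hxs
    have hrP : rPrime T p r ≤ supNorm T (extV x) := rPrime_le hT (extV x) hu0 huT hxr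
    obtain ⟨k₀, hk₀1, hk₀T, hk₀⟩ := supNorm_mem hT (extV x)
    have hk₀mem : k₀ ∈ Finset.Icc 1 T := Finset.mem_Icc.2 ⟨hk₀1, hk₀T⟩
    rw [← Finset.add_sum_erase _ _ hk₀mem]
    have hF0 : Fint f k₀ (extV x k₀) ≤ supFbetween f k₀ (rPrime T p r) (sPrime T p s) :=
      le_supFbetween (hf k₀ hk₀1 hk₀T) hsPnn (hk₀ ▸ hrP) (hk₀ ▸ hsP)
    have hFend := h3 k₀ hk₀1 hk₀T
    have hrest : ∑ j ∈ (Finset.Icc 1 T).erase k₀, Fint f j (extV x j)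
        ≤ ∑ j ∈ (Finset.Icc 1 T).erase k₀, supFle f j (sPrime T p s) := by
      apply Finset.sum_le_sum
      intro j hj
      have hjmem := Finset.mem_of_mem_erase hj
      simp only [Finset.mem_Icc] at hjmem
      apply le_supFle (hf j hjmem.1 hjmem.2) hsPnn
      exact le_trans (le_supNorm hT (extV x) hjmem.1 hjmem.2) hsP
    linarith
  -- μ ≤ s ⟹  potential ≤ Ssum
  set Ssum := ∑ k ∈ Finset.Icc 1 T, supFle f k (sPrime T p s) with hSsumdef
  have hSsum_nonneg : 0 ≤ Ssum := by
    apply Finset.sum_nonneg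
    intro k hk
    simp only [Finset.mem_Icc] at hk
    exact supFle_nonneg (hf k hk.1 hk.2) hsPnn
  have hFleS : ∀ x : Fin T → ℝ, muF T p (extV x) ≤ s →
      ∑ k ∈ Finset.Icc 1 T, Fint f k (extV x k) ≤ Ssum := by
    intro x hxs
    have hsP : supNorm T (extV x) ≤ sPrime T p s :=
      le_sPrime hT hp hpM (le_of_lt hs0) (extV x) (extV_zero x) (extV_top x) hxs
    apply Finset.sum_le_sum
    intro k hk
    simp only [Finset.mem_Icc] at hk
    apply le_supFle (hf k hk.1 hk.2) hsPnn
    exact le_trans (le_supNorm hT (extV x) hk.1 hk.2) hsP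
  -- data from (2)
  obtain ⟨tt, htt⟩ := h2
  set w : Fin T → ℝ := fun i => tt (i.1+1) with hwdef
  have hDw : ∑ k ∈ Finset.Icc 1 T, Fint f k (extV w k) = ∑ k ∈ Finset.Icc 1 T, Fint f k (tt k) := by
    apply Finset.sum_congr rfl
    intro k hk
    simp only [Finset.mem_Icc] at hk
    rw [extV_mem w k hk.1 hk.2, hwdef]
    simp only
    congr 2
    omega
  set Dsum := ∑ k ∈ Finset.Icc 1 T, Fint f k (tt k) with hDsumdef
  have hSD : Ssum < Dsum := htt
  set lamS := (muF T p (extV w) + 1) / (Dsum - Ssum) with hlamSdef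
  have hmuw : 0 ≤ muF T p (extV w) := muF_nonneg hp (extV w)
  have hlamSpos : 0 < lamS := div_pos (by linarith) (by linarith)
  -- the energy functional and its derivative
  set EE := EV T p f lamS with hEEdef
  set DD := DV T p f lamS with hDDdef
  have hD : ∀ x, HasFDerivAt EE (DD x) x := hasFDerivAt_EV p hp f hf lamS
  have hDc : Continuous DD := continuous_DV p hp f hf lamS
  have hEcont : Continuous EE := by
    rw [continuous_iff_continuousAt]
    exact fun x => (hD x).continuousAt
  have hmucont : Continuous (fun x : Fin T → ℝ => muF T p (extV x)) := by
    have h0 : Continuous (EV T p f 0) := by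
      rw [continuous_iff_continuousAt]
      exact fun x => (hasFDerivAt_EV p hp f hf 0 x).continuousAt
    have : EV T p f 0 = fun x : Fin T → ℝ => muF T p (extV x) := by
      funext x
      unfold EV
      ring
    rwa [this] at h0
  have hEE0 : EE 0 = 0 := by
    rw [hEEdef]
    unfold EV
    rw [extV_of_zero, muF_zero_fn hp]
    have : ∑ k ∈ Finset.Icc 1 T, Fint f k ((fun _ => (0:ℝ)) k) = 0 := by
      apply Finset.sum_eq_zero
      intro k _
      exact Fint_zero f k
    rw [this]
    ring
  have hEV_eq : ∀ x : Fin T → ℝ, EE x = muF T p (extV x)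
      - lamS * ∑ k ∈ Finset.Icc 1 T, Fint f k (extV x k) := by
    intro x
    rw [hEEdef]
    rfl
  -- E ≥ r on the annulus
  have hEEring : ∀ x : Fin T → ℝ, r ≤ muF T p (extV x) → muF T p (extV x) ≤ s → r ≤ EE x := by
    intro x hxr hxs
    have h0 := hringF x hxr hxs
    rw [hEV_eq x]
    nlinarith
  -- coercivity
  set CA : ℝ := (T : ℝ) * ((T+1:ℝ)) ^ pm with hCAdef
  have hCApos : 0 < CA := by
    rw [hCAdef]
    have hT' : (0:ℝ) < (T:ℝ) := by exact_mod_cast hT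
    have : (0:ℝ) < ((T+1:ℝ)) ^ pm := Real.rpow_pos_of_pos (by positivity) pm
    positivity
  set ε : ℝ := 1 / (2 * lamS * (CA * pM + 1)) with hεdef
  have hεpos : 0 < ε := by
    rw [hεdef]
    have : (0:ℝ) < CA * pM + 1 := by nlinarith
    positivity
  have hCk : ∀ k : ℕ, ∃ C : ℝ, 0 ≤ C ∧ ∀ t : ℝ, 1 ≤ k → k ≤ T → Fint f k t ≤ ε * |t| ^ pm + C := by
    intro k
    by_cases hk : 1 ≤ k ∧ k ≤ T
    · obtain ⟨K, hKpos, hK⟩ := h1 k hk.1 hk.2 ε hεpos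
      obtain ⟨t₀, _, ht₀max⟩ := (isCompact_Icc (a := -K) (b := K)).exists_isMaxOn
        ⟨0, by constructor <;> linarith⟩ ((continuous_Fint (hf k hk.1 hk.2)).continuousOn)
      refine ⟨max (Fint f k t₀) 0, le_max_right _ _, ?_⟩
      intro t _ _
      have hεt : (0:ℝ) ≤ ε * |t| ^ pm := by positivity
      rcases le_or_gt (|t|) K with h | h
      · have h2 : Fint f k t ≤ Fint f k t₀ := by
          have := ht₀max (abs_le.1 h : t ∈ Set.Icc (-K) K)
          exact this
        have h3 : Fint f k t₀ ≤ max (Fint f k t₀) 0 := le_max_left _ _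
        linarith
      · have := hK t h
        have h3 : (0:ℝ) ≤ max (Fint f k t₀) 0 := le_max_right _ _
        linarith
    · exact ⟨0, le_refl 0, fun t h1' h2' => absurd ⟨h1', h2'⟩ hk⟩
  choose Cf hCf0 hCf using hCk
  set CF := ∑ k ∈ Finset.Icc 1 T, Cf k with hCFdef
  set Cbig := lamS * (ε * (CA * (T+1:ℝ)) + CF) with hCbigdef
  have hkey : ∀ x : Fin T → ℝ, muF T p (extV x) / 2 - Cbig ≤ EE x := by
    intro x
    set μx := muF T p (extV x) with hμxdef
    have hμnn : 0 ≤ μx := muF_nonneg hp (extV x)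
    have hsum : ∑ k ∈ Finset.Icc 1 T, Fint f k (extV x k)
        ≤ ε * (CA * ((T+1:ℝ) + pM * μx)) + CF := by
      have hstep : ∑ k ∈ Finset.Icc 1 T, Fint f k (extV x k)
          ≤ ∑ k ∈ Finset.Icc 1 T, (ε * |extV x k| ^ pm + Cf k) := by
        apply Finset.sum_le_sum
        intro k hk
        simp only [Finset.mem_Icc] at hk
        exact hCf k (extV x k) hk.1 hk.2
      have hsplit : ∑ k ∈ Finset.Icc 1 T, (ε * |extV x k| ^ pm + Cf k)
          = ε * (∑ k ∈ Finset.Icc 1 T, |extV x k| ^ pm) + CF := by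
        rw [Finset.sum_add_distrib, Finset.mul_sum, hCFdef]
      have hpow := sum_abs_rpow_le hp hpM hpm1 hpmle (extV x) (extV_zero x)
      have : ε * (∑ k ∈ Finset.Icc 1 T, |extV x k| ^ pm) ≤ ε * (CA * ((T+1:ℝ) + pM * μx)) := by
        apply mul_le_mul_of_nonneg_left _ (le_of_lt hεpos)
        rw [hCAdef, hμxdef]
        calc ∑ k ∈ Finset.Icc 1 T, |extV x k| ^ pm
            ≤ (T : ℝ) * ((T+1:ℝ) ^ pm * ((T+1 : ℝ) + pM * muF T p (extV x))) := hpow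
          _ = (T : ℝ) * (T+1:ℝ) ^ pm * ((T+1 : ℝ) + pM * muF T p (extV x)) := by ring
      linarith [hstep, hsplit ▸ hstep]
    have hlamε : lamS * ε * (CA * pM) ≤ 1/2 := by
      rw [hεdef]
      have h1' : lamS * (1 / (2 * lamS * (CA * pM + 1))) = 1 / (2 * (CA * pM + 1)) := by
        field_simp
      rw [h1']
      rw [div_mul_eq_mul_div, one_mul, div_le_iff₀ (by nlinarith)]
      nlinarith
    have hCFnn : 0 ≤ CF := Finset.sum_nonneg (fun k _ => hCf0 k)
    rw [hEV_eq x, ← hμxdef]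
    have h2 : lamS * (∑ k ∈ Finset.Icc 1 T, Fint f k (extV x k))
        ≤ lamS * (ε * (CA * ((T+1:ℝ) + pM * μx)) + CF) :=
      mul_le_mul_of_nonneg_left hsum (le_of_lt hlamSpos)
    have h3 : lamS * (ε * (CA * ((T+1:ℝ) + pM * μx)) + CF)
        = Cbig + (lamS * ε * (CA * pM)) * μx := by
      rw [hCbigdef]; ring
    have h4 : (lamS * ε * (CA * pM)) * μx ≤ (1/2) * μx :=
      mul_le_mul_of_nonneg_right hlamε hμnn
    linarith
  have hcoerc : ∀ M : ℝ, ∃ R, ∀ x : Fin T → ℝ, EE x ≤ M → ‖x‖ ≤ R := by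
    intro M
    set M' := max (2*(M + Cbig)) 0 with hM'def
    refine ⟨(T+1:ℝ) * max 1 (pM * M'), ?_⟩
    intro x hx
    have hμ : muF T p (extV x) ≤ M' := by
      have h5 := hkey x
      rw [hM'def]
      have : muF T p (extV x) ≤ 2*(M + Cbig) := by linarith
      exact le_trans this (le_max_left _ _)
    have hbd : ∀ i : Fin T, |x i| ≤ (T+1:ℝ) * max 1 (pM * M') := by
      intro i
      have h6 := value_bound hp hpM (extV x) (extV_zero x)
        (le_max_right _ _ : (0:ℝ) ≤ M') hμ (k := i.1+1) (by omega)
      rwa [extV_succ] at h6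
    rw [pi_norm_le_iff_of_nonneg (by positivity)]
    intro i
    rw [Real.norm_eq_abs]
    exact hbd i
  -- local minimizer x1 on {μ ≤ s}
  set Ks : Set (Fin T → ℝ) := {x | muF T p (extV x) ≤ s} with hKsdef
  have hKsclosed : IsClosed Ks := isClosed_le hmucont continuous_const
  have hKscomp : IsCompact Ks := by
    apply (isCompact_closedBall (0 : Fin T → ℝ) ((T+1:ℝ) * max 1 (pM * s))).of_isClosed_subset
      hKsclosed
    intro x hx
    simp only [Metric.mem_closedBall, dist_zero_right]
    rw [pi_norm_le_iff_of_nonneg (by positivity)]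
    intro i
    rw [Real.norm_eq_abs]
    have h6 := value_bound hp hpM (extV x) (extV_zero x) (le_of_lt hs0) hx (k := i.1+1) (by omega)
    rwa [extV_succ] at h6
  have h0Ks : (0 : Fin T → ℝ) ∈ Ks := by
    simp only [hKsdef, Set.mem_setOf_eq]
    rw [extV_of_zero, muF_zero_fn hp]
    exact le_of_lt hs0
  obtain ⟨x1, hx1mem, hx1min⟩ := hKscomp.exists_isMinOn ⟨0, h0Ks⟩ hEcont.continuousOn
  have hEx1 : EE x1 ≤ 0 := by
    have h9 : EE x1 ≤ EE 0 := hx1min h0Ks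
    linarith
  have hmux1 : muF T p (extV x1) < r := by
    by_contra hge
    push_neg at hge
    have := hEEring x1 hge hx1mem
    linarith
  have hx1loc : IsLocalMin EE x1 := by
    have hopen : IsOpen {x : Fin T → ℝ | muF T p (extV x) < s} := isOpen_lt hmucont continuous_const
    have hx1in : x1 ∈ {x : Fin T → ℝ | muF T p (extV x) < s} := by
      simp only [Set.mem_setOf_eq]
      linarith
    apply Filter.eventually_of_mem (hopen.mem_nhds hx1in)
    intro y hy
    have hyK : y ∈ Ks := by
      simp only [hKsdef, Set.mem_setOf_eq]
      exact le_of_lt hy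
    exact hx1min hyK
  have hDx1 : DD x1 = 0 := by
    have h0' := hx1loc.fderiv_eq_zero
    rw [(hD x1).fderiv] at h0'
    exact h0'
  -- global minimizer xg
  obtain ⟨xg, hxg⟩ : ∃ xg : Fin T → ℝ, ∀ y, EE xg ≤ EE y := by
    obtain ⟨R, hR⟩ := hcoerc (EE w)
    set Sw : Set (Fin T → ℝ) := {x | EE x ≤ EE w} with hSwdef
    have hSwclosed : IsClosed Sw := isClosed_le hEcont continuous_const
    have hSwcomp : IsCompact Sw := by
      apply (isCompact_closedBall (0 : Fin T → ℝ) (max R 0)).of_isClosed_subset hSwclosed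
      intro x hx
      simp only [Metric.mem_closedBall, dist_zero_right]
      exact le_trans (hR x hx) (le_max_left _ _)
    have hwSw : w ∈ Sw := by
      simp only [hSwdef, Set.mem_setOf_eq]
      exact le_refl _
    obtain ⟨xg, hxgmem, hxgmin⟩ := hSwcomp.exists_isMinOn ⟨w, hwSw⟩ hEcont.continuousOn
    refine ⟨xg, fun y => ?_⟩
    rcases le_or_gt (EE y) (EE w) with h | h
    · have hySw : y ∈ Sw := by
        simp only [hSwdef, Set.mem_setOf_eq]
        exact h
      exact hxgmin hySw
    · exact le_trans (hxgmin hwSw) (le_of_lt h)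
  have hEw : EE w < -(lamS * Ssum) := by
    rw [hEV_eq w, hDw]
    have hcalc : lamS * (Dsum - Ssum) = muF T p (extV w) + 1 := by
      rw [hlamSdef]
      field_simp
      rw [div_self (by linarith : Dsum - Ssum ≠ 0)]
    nlinarith
  have hExg : EE xg < -(lamS * Ssum) := lt_of_le_of_lt (hxg w) hEw
  have hEge : ∀ x : Fin T → ℝ, muF T p (extV x) ≤ s → -(lamS * Ssum) ≤ EE x := by
    intro x hx
    have h7 := hFleS x hx
    have hμnn := muF_nonneg hp (extV x)
    rw [hEV_eq x]
    nlinarith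
  have hmuxg : s < muF T p (extV xg) := by
    by_contra hle
    push_neg at hle
    have := hEge xg hle
    linarith
  have hDxg : DD xg = 0 := by
    have hloc : IsLocalMin EE xg := Filter.Eventually.of_forall (fun y => hxg y)
    have h0' := hloc.fderiv_eq_zero
    rw [(hD xg).fderiv] at h0'
    exact h0'
  have hExg0 : EE xg < 0 := by nlinarith
  have hEx1gt : EE xg < EE x1 := lt_of_lt_of_le hExg (hEge x1 hx1mem)
  -- mountain pass : third critical point
  have hringMPT : ∀ γ : ℝ → (Fin T → ℝ), Continuous γ → γ 0 = x1 → γ 1 = xg →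
      ∃ t ∈ Set.Icc (0:ℝ) 1, r ≤ EE (γ t) := by
    intro γ hγ hγ0 hγ1
    have hgc : ContinuousOn (fun t => muF T p (extV (γ t))) (Set.Icc (0:ℝ) 1) :=
      (hmucont.comp hγ).continuousOn
    have hmem : r ∈ Set.Icc (muF T p (extV (γ 0))) (muF T p (extV (γ 1))) := by
      rw [hγ0, hγ1]
      exact ⟨le_of_lt hmux1, by linarith⟩
    obtain ⟨t, ht, hgt⟩ := intermediate_value_Icc (zero_le_one) hgc hmem
    have hgt' : muF T p (extV (γ t)) = r := hgt
    exact ⟨t, ht, hEEring (γ t) (le_of_eq hgt'.symm) (by rw [hgt']; linarith)⟩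
  obtain ⟨x3, hDx3, hEx3⟩ := mpt_lite hD hDc hcoerc hr hEx1 (le_of_lt hExg0) hringMPT
  -- assembly
  have hdistinct : ∀ y y' : Fin T → ℝ, EE y ≠ EE y' → DistinctH T (extV y) (extV y') := by
    intro y y' hne
    by_contra hnd
    unfold DistinctH at hnd
    push_neg at hnd
    apply hne
    have : y = y' := by
      funext i
      have h8 := hnd (i.1+1) (by omega) (by omega)
      rwa [extV_succ, extV_succ] at h8
    rw [this]
  have hnonzero : ∀ y : Fin T → ℝ, EE y ≠ 0 → NonzeroH T (extV y) := by
    intro y hne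
    by_contra hnz
    unfold NonzeroH at hnz
    push_neg at hnz
    apply hne
    have : y = 0 := by
      funext i
      have h8 := hnz (i.1+1) (by omega) (by omega)
      rwa [extV_succ] at h8
    rw [this, hEE0]
  have hEx3pos : 0 < EE x3 := by linarith
  refine ⟨lamS, hlamSpos, extV x1, extV xg, extV x3,
    crit_of_DV_eq_zero p f lamS x1 hDx1,
    crit_of_DV_eq_zero p f lamS xg hDxg,
    crit_of_DV_eq_zero p f lamS x3 hDx3,
    hdistinct x1 xg (Ne.symm (ne_of_lt hEx1gt)),
    hdistinct x1 x3 (ne_of_lt (lt_of_le_of_lt hEx1 hEx3pos)),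
    hdistinct xg x3 (ne_of_lt (lt_trans hExg0 hEx3pos)),
    hnonzero xg (ne_of_lt hExg0),
    hnonzero x3 (Ne.symm (ne_of_lt hEx3pos))⟩
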